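/- Let f be a rational function with no poles on the unit circle, f = R/Q in lowest terms, with poles a₁,…,a_m listed with multiplicity (where a pole at ∞ of order deg R − deg Q is included if deg R > deg Q). Suppose |f'(u)| ≤ ‖f‖_T · max(B_m⁺(u), B_m⁻(u)) holds for u on the unit circle T when deg R ≤ m, where B_m⁺(u) = Σ_{|a_j|>1} (|a_j|²−1)/|a_j−u|² and B_m⁻(u) = Σ_{|a_j|<1} (1−|a_j|²)/|a_j−u|². Then for deg R = m + d with d > 0, one has |f'(u)| ≤ max(B_m⁺(u) + d, B_m⁻(u))·‖f‖_T for all u ∈ T. -/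

import Mathlib

open Filter

set_option maxHeartbeats 1000000



/-- If the Borwein–Erdélyi inequality holds for rational functions whose numerator degree
does not exceed the number of (finite) poles, then for a numerator of degree `m + d`
(`d > 0`) one has the bound with `B_m⁺(u) + d` in the maximum. -/
theorem borwein_erdelyi_higher_degree
    (H : ∀ (m' : ℕ) (a' : Fin m' → ℂ), (∀ j, ‖a' j‖ ≠ 1) →
      ∀ R' : Polynomial ℂ, R'.natDegree ≤ m' →
      ∀ u : ℂ, ‖u‖ = 1 →
        ‖deriv (fun z : ℂ => R'.eval z / ∏ j, (z - a' j)) u‖ ≤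
          max (∑ j ∈ Finset.univ.filter (fun j => 1 < ‖a' j‖),
                  (‖a' j‖ ^ 2 - 1) / ‖a' j - u‖ ^ 2)
              (∑ j ∈ Finset.univ.filter (fun j => ‖a' j‖ < 1),
                  (1 - ‖a' j‖ ^ 2) / ‖a' j - u‖ ^ 2) *
          sSup ((fun v : ℂ => ‖R'.eval v / ∏ j, (v - a' j)‖) ''
            Metric.sphere (0 : ℂ) 1))
    (m d : ℕ) (hd : 0 < d) (a : Fin m → ℂ) (ha : ∀ j, ‖a j‖ ≠ 1)
    (R : Polynomial ℂ) (hR : R.natDegree = m + d) :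
    ∀ u : ℂ, ‖u‖ = 1 →
      ‖deriv (fun z : ℂ => R.eval z / ∏ j, (z - a j)) u‖ ≤
        max ((∑ j ∈ Finset.univ.filter (fun j => 1 < ‖a j‖),
                (‖a j‖ ^ 2 - 1) / ‖a j - u‖ ^ 2) + (d : ℝ))
            (∑ j ∈ Finset.univ.filter (fun j => ‖a j‖ < 1),
                (1 - ‖a j‖ ^ 2) / ‖a j - u‖ ^ 2) *
        sSup ((fun v : ℂ => ‖R.eval v / ∏ j, (v - a j)‖) ''
          Metric.sphere (0 : ℂ) 1) := by
  intro u hu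
  obtain ⟨e, rfl⟩ : ∃ e, d = e + 1 := ⟨d - 1, (Nat.succ_pred_eq_of_pos hd).symm⟩
  set d := e + 1 with hdval
  set S := sSup ((fun v : ℂ => ‖R.eval v / ∏ j, (v - a j)‖) ''
      Metric.sphere (0 : ℂ) 1) with hSdef
  set Bp := ∑ j ∈ Finset.univ.filter (fun j => 1 < ‖a j‖),
      (‖a j‖ ^ 2 - 1) / ‖a j - u‖ ^ 2 with hBp
  set Bm := ∑ j ∈ Finset.univ.filter (fun j => ‖a j‖ < 1),
      (1 - ‖a j‖ ^ 2) / ‖a j - u‖ ^ 2 with hBm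
  set f := fun z : ℂ => R.eval z / ∏ j, (z - a j) with hf
  have hmemu : u ∈ Metric.sphere (0:ℂ) 1 := by simp [Complex.dist_eq, hu]
  have hcont : ContinuousOn (fun v : ℂ => ‖R.eval v / ∏ j, (v - a j)‖)
      (Metric.sphere (0:ℂ) 1) := by
    apply Continuous.comp_continuousOn continuous_norm
    apply ContinuousOn.div
    · exact R.continuous.continuousOn
    · exact (continuousOn_finset_prod _ fun j _ =>
        (continuous_id.sub continuous_const).continuousOn)
    · intro v hv
      rw [Finset.prod_ne_zero_iff]
      intro j _
      rw [sub_ne_zero]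
      intro h
      have hv1 : ‖v‖ = 1 := by simpa [Complex.dist_eq] using hv
      exact ha j (h ▸ hv1)
  have hbdd : BddAbove ((fun v : ℂ => ‖R.eval v / ∏ j, (v - a j)‖) ''
      Metric.sphere (0:ℂ) 1) := (isCompact_sphere 0 1).bddAbove_image hcont
  have hfle : ∀ v : ℂ, ‖v‖ = 1 → ‖f v‖ ≤ S := by
    intro v hv
    exact le_csSup hbdd (Set.mem_image_of_mem _ (by simp [Complex.dist_eq, hv]))
  have hS0 : 0 ≤ S := le_trans (by positivity) (hfle u hu)
  have hBm0 : 0 ≤ Bm := by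
    apply Finset.sum_nonneg
    intro j hj
    rw [Finset.mem_filter] at hj
    have h1 : ‖a j‖ < 1 := hj.2
    have h2 : (0:ℝ) ≤ ‖a j‖ := norm_nonneg _
    have h3 : (0:ℝ) ≤ 1 - ‖a j‖ ^ 2 := by nlinarith
    positivity
  set F : ℝ → ℝ := fun τ => max (Bp + d * ((τ+1)/(τ-1))) Bm * S * ((τ+1)/(τ-1))^d
      + S * d * ((τ+1)/(τ-1))^e * (τ-1)⁻¹ with hF
  have key : ∀ τ : ℝ, 1 < τ → ‖deriv f u‖ ≤ F τ := by
    intro τ hτ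
    have hτ1 : τ - 1 ≠ 0 := by linarith
    have hτpos : (0:ℝ) < τ - 1 := by linarith
    have habsτ : ‖(τ:ℂ)‖ = τ := by
      rw [Complex.norm_real, Real.norm_eq_abs]; exact abs_of_pos (by linarith)
    have hne : u ≠ (τ:ℂ) := fun h => by rw [h, habsτ] at hu; linarith
    set a' : Fin (m + d) → ℂ := Fin.append a (fun _ => (τ : ℂ)) with ha'
    have ha'ne : ∀ j, ‖a' j‖ ≠ 1 := by
      intro j
      refine Fin.addCases (motive := fun j => ‖a' j‖ ≠ 1) ?_ ?_ j
      · intro i; simpa [ha', Fin.append_left] using ha i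
      · intro i; simp only [ha', Fin.append_right, habsτ]; intro h; linarith [h]
    have hprod : ∀ z : ℂ, (∏ j, (z - a' j)) = (∏ j, (z - a j)) * (z - (τ:ℂ)) ^ d := by
      intro z
      rw [Fin.prod_univ_add]
      simp [ha', Fin.append_left, Fin.append_right]
    set g := fun z : ℂ => R.eval z / ∏ j, (z - a' j) with hg
    have hgval : ∀ z : ℂ, ‖g z‖
        = ‖f z‖ / ‖z - (τ:ℂ)‖ ^ d := by
      intro z
      simp only [hg, hf]
      rw [hprod z, ← div_div, norm_div, norm_pow]
    have hdist : ∀ v : ℂ, ‖v‖ = 1 → τ - 1 ≤ ‖v - (τ:ℂ)‖ := by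
      intro v hv
      have h := norm_sub_norm_le ((τ:ℂ)) v
      rw [habsτ, hv] at h
      calc τ - 1 ≤ ‖(τ:ℂ) - v‖ := h
        _ = ‖v - (τ:ℂ)‖ := by rw [← norm_neg, neg_sub]
    have hgle : ∀ v : ℂ, ‖v‖ = 1 → ‖g v‖ ≤ S / (τ-1)^d := by
      intro v hv
      rw [hgval v]
      have h1 : (τ-1)^d ≤ ‖v - (τ:ℂ)‖^d :=
        pow_le_pow_left₀ hτpos.le (hdist v hv) d
      have h2 : (0:ℝ) < (τ-1)^d := by positivity
      exact div_le_div₀ hS0 (hfle v hv) h2 h1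
    have hS'nn : (0:ℝ) ≤ sSup ((fun v : ℂ => ‖R.eval v / ∏ j, (v - a' j)‖) ''
        Metric.sphere (0 : ℂ) 1) := by
      apply Real.sSup_nonneg
      rintro x ⟨v, hv, rfl⟩
      positivity
    have hS'le : sSup ((fun v : ℂ => ‖R.eval v / ∏ j, (v - a' j)‖) ''
        Metric.sphere (0 : ℂ) 1) ≤ S / (τ-1)^d := by
      apply csSup_le ⟨_, Set.mem_image_of_mem _ hmemu⟩
      rintro x ⟨v, hv, rfl⟩
      have hv1 : ‖v‖ = 1 := by simpa [Complex.dist_eq] using hv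
      exact hgle v hv1
    have HH := H (m + d) a' ha'ne R (le_of_eq hR) u hu
    rw [← hg] at HH
    have hsum1 : (∑ j ∈ Finset.univ.filter (fun j => 1 < ‖a' j‖),
        (‖a' j‖ ^ 2 - 1) / ‖a' j - u‖ ^ 2)
        = Bp + d * ((τ^2 - 1) / ‖(τ:ℂ) - u‖ ^ 2) := by
      rw [hBp, Finset.sum_filter, Finset.sum_filter, Fin.sum_univ_add]
      simp [ha', Fin.append_left, Fin.append_right, habsτ, hτ, mul_comm, abs_of_pos (show (0:ℝ) < τ by linarith), not_le.2 hτ]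
    have hsum2 : (∑ j ∈ Finset.univ.filter (fun j => ‖a' j‖ < 1),
        (1 - ‖a' j‖ ^ 2) / ‖a' j - u‖ ^ 2) = Bm := by
      rw [hBm, Finset.sum_filter, Finset.sum_filter, Fin.sum_univ_add]
      simp [ha', Fin.append_left, Fin.append_right, habsτ, not_lt.2 hτ.le, abs_of_pos (show (0:ℝ) < τ by linarith)]
    rw [hsum1, hsum2] at HH
    have hc : (τ^2 - 1) / ‖(τ:ℂ) - u‖ ^ 2 ≤ (τ+1)/(τ-1) := by
      have heq : (τ+1)/(τ-1) = (τ^2-1)/(τ-1)^2 := by field_simp; ring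
      rw [heq]
      have h1 : τ - 1 ≤ ‖(τ:ℂ) - u‖ :=
        calc τ - 1 ≤ ‖u - (τ:ℂ)‖ := hdist u hu
          _ = ‖(τ:ℂ) - u‖ := by rw [← norm_neg, neg_sub]
      have h2 : (τ-1)^2 ≤ ‖(τ:ℂ) - u‖ ^ 2 := pow_le_pow_left₀ hτpos.le h1 2
      have h3 : (0:ℝ) ≤ τ^2 - 1 := by nlinarith
      have h4 : (0:ℝ) < (τ-1)^2 := by positivity
      exact div_le_div_of_nonneg_left h3 h4 h2
    have hM2nn : (0:ℝ) ≤ max (Bp + d * ((τ+1)/(τ-1))) Bm := le_trans hBm0 (le_max_right _ _)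
    have hM : max (Bp + (d:ℝ) * ((τ^2 - 1) / ‖(τ:ℂ) - u‖ ^ 2)) Bm
        ≤ max (Bp + d * ((τ+1)/(τ-1))) Bm := by
      apply max_le_max _ le_rfl
      have : (d:ℝ) * ((τ^2 - 1) / ‖(τ:ℂ) - u‖ ^ 2) ≤ d * ((τ+1)/(τ-1)) :=
        mul_le_mul_of_nonneg_left hc (Nat.cast_nonneg d)
      linarith
    have hDg : ‖deriv g u‖
        ≤ max (Bp + d * ((τ+1)/(τ-1))) Bm * (S / (τ-1)^d) :=
      le_trans HH (mul_le_mul hM hS'le hS'nn hM2nn)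
    have hgdiff : DifferentiableAt ℂ g u := by
      have hden : (fun z : ℂ => ∏ j, (z - a' j))
          = fun z => (∏ j, (Polynomial.X - Polynomial.C (a' j))).eval z := by
        funext z; simp [Polynomial.eval_prod]
      refine DifferentiableAt.div R.differentiableAt ?_ ?_
      · rw [hden]; exact Polynomial.differentiableAt _
      · rw [Finset.prod_ne_zero_iff]
        intro j _
        rw [sub_ne_zero]
        intro h
        exact ha'ne j (h ▸ hu)
    have hEvEq : f =ᶠ[nhds u] fun z => g z * (z - (τ:ℂ))^d := by
      filter_upwards [eventually_ne_nhds hne] with z hz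
      have hcne : (z - (τ:ℂ))^d ≠ 0 := pow_ne_zero _ (sub_ne_zero.2 hz)
      simp only [hf, hg]
      rw [hprod z, div_mul_eq_mul_div, mul_div_mul_right _ _ hcne]
    have hder : HasDerivAt (fun z => g z * (z - (τ:ℂ))^d)
        (deriv g u * (u - (τ:ℂ))^d + g u * (↑d * (u - (τ:ℂ))^(d-1) * 1)) u :=
      hgdiff.hasDerivAt.mul (((hasDerivAt_id u).sub_const _).pow d)
    have hderiv : deriv f u
        = deriv g u * (u - (τ:ℂ))^d + g u * (↑d * (u - (τ:ℂ))^(d-1) * 1) := by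
      rw [hEvEq.deriv_eq]; exact hder.deriv
    have htuub : ‖u - (τ:ℂ)‖ ≤ τ + 1 := by
      have h := norm_sub_le u ((τ:ℂ))
      rw [habsτ, hu] at h
      linarith
    have hstep1 : ‖deriv f u‖
        ≤ ‖deriv g u‖ * ‖u - (τ:ℂ)‖^d
          + ‖g u‖ * ((d:ℝ) * ‖u - (τ:ℂ)‖^(d-1)) := by
      rw [hderiv]
      refine le_trans (norm_add_le _ _) ?_
      simp [norm_mul, norm_pow, Complex.norm_natCast]
    have hstep2 : ‖deriv g u‖ * ‖u - (τ:ℂ)‖^d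
          + ‖g u‖ * ((d:ℝ) * ‖u - (τ:ℂ)‖^(d-1))
        ≤ (max (Bp + d * ((τ+1)/(τ-1))) Bm * (S / (τ-1)^d)) * (τ+1)^d
          + (S / (τ-1)^d) * ((d:ℝ) * (τ+1)^(d-1)) := by
      apply add_le_add
      · refine mul_le_mul hDg (pow_le_pow_left₀ (norm_nonneg _) htuub d)
          (by positivity) (mul_nonneg hM2nn (by positivity))
      · refine mul_le_mul (hgle u hu)
          (mul_le_mul_of_nonneg_left (pow_le_pow_left₀ (norm_nonneg _) htuub (d-1))
            (Nat.cast_nonneg d))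
          (by positivity) (by positivity)
    have hfinal : (max (Bp + d * ((τ+1)/(τ-1))) Bm * (S / (τ-1)^d)) * (τ+1)^d
          + (S / (τ-1)^d) * ((d:ℝ) * (τ+1)^(d-1)) = F τ := by
      simp only [hF, hdval, Nat.add_sub_cancel]
      push_cast
      generalize max _ Bm = M
      simp only [div_pow]
      field_simp
      ring
    calc ‖deriv f u‖ ≤ _ := hstep1
      _ ≤ _ := hstep2
      _ = F τ := hfinal
  have hinv : Tendsto (fun τ : ℝ => (τ - 1)⁻¹) atTop (nhds 0) := by
    have h : Tendsto (fun τ : ℝ => τ - 1) atTop atTop :=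
      tendsto_atTop_add_const_right _ (-1) tendsto_id |>.congr
        (by intro x; simp [sub_eq_add_neg])
    exact h.inv_tendsto_atTop
  have hr : Tendsto (fun τ : ℝ => (τ + 1)/(τ - 1)) atTop (nhds 1) := by
    have h2 : Tendsto (fun τ : ℝ => 1 + 2 * (τ - 1)⁻¹) atTop (nhds 1) := by
      have := (hinv.const_mul 2).const_add 1
      simpa using this
    refine h2.congr' ?_
    filter_upwards [eventually_gt_atTop 1] with τ hτ
    have : τ - 1 ≠ 0 := by linarith
    field_simp
    ring
  have hFlim : Tendsto F atTop (nhds (max (Bp + (d:ℝ)) Bm * S)) := by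
    have h1 : Tendsto (fun τ : ℝ => max (Bp + d * ((τ+1)/(τ-1))) Bm * S * ((τ+1)/(τ-1))^d
        + S * d * ((τ+1)/(τ-1))^e * (τ-1)⁻¹) atTop
        (nhds (max (Bp + (d:ℝ) * 1) Bm * S * 1^d + S * d * 1^e * 0)) := by
      apply Tendsto.add
      · exact ((((hr.const_mul (d:ℝ)).const_add Bp).max tendsto_const_nhds).mul_const S).mul
          (hr.pow d)
      · exact ((hr.pow e).const_mul (S * (d:ℝ))).mul hinv
    rw [hF]
    simpa using h1
  refine ge_of_tendsto hFlim ?_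
  filter_upwards [eventually_gt_atTop 1] with τ hτ
  exact key τ hτ
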